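/- Let (α_t)_{t ∈ ℕ} be real numbers and let, for each iteration t' and each index t ≤ t', w_t^{(t')} denote the coefficient of g_t in the expansion f_{t'} = Σ_{t=0}^{t'} w_t^{(t')} g_t of the sequence defined by f_{t'+1} = (1 + α_{t'}) f_{t'} − α_{t'} f_{t'−1} + ν γ_{t'+1} g_{t'+1}, i.e. the coefficients satisfy w_t^{(t'+1)} = (1 + α_{t'}) w_t^{(t')} − α_{t'} w_t^{(t'−1)} for t < t', w_{t'}^{(t'+1)} = (1 + α_{t'}) w_{t'}^{(t')}, and w_{t'+1}^{(t'+1)} = ν γ_{t'+1}, with the convention w_t^{(t−1)} = 0. Then for all indices t ≤ t': w_t^{(t'+1)} − w_t^{(t')} = (∏_{k=t}^{t'} α_k) · w_t^{(t)}, and consequently w_t^{(t'+1)} = (1 + Σ_{j=t}^{t'} ∏_{k=t}^{j} α_k) · w_t^{(t)}. -/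

import Mathlib

/-- Closed-form solution of the recursion on the coefficients induced by the
accelerated boosting update. Here `w t t'` denotes the coefficient `w_t^{(t')}`
of `g t` in the expansion of `f t'`. -/
theorem accelerated_boosting_weight_recursion_closed_form
    (α : ℕ → ℝ) (ν : ℝ) (γ : ℕ → ℝ)
    (w : ℕ → ℕ → ℝ)
    (hconv : ∀ t, 1 ≤ t → w t (t - 1) = 0)
    (hrec : ∀ t t', t < t' → w t (t' + 1) = (1 + α t') * w t t' - α t' * w t (t' - 1))
    (hstep : ∀ t', w t' (t' + 1) = (1 + α t') * w t' t')
    (hnew : ∀ t', w (t' + 1) (t' + 1) = ν * γ (t' + 1)) :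
    ∀ t t', t ≤ t' →
      w t (t' + 1) - w t t' = (∏ k ∈ Finset.Icc t t', α k) * w t t ∧
      w t (t' + 1) = (1 + ∑ j ∈ Finset.Icc t t', ∏ k ∈ Finset.Icc t j, α k) * w t t := by
  intro t t' ht
  induction t', ht using Nat.le_induction with
  | base =>
    simp only [Finset.Icc_self, Finset.prod_singleton, Finset.sum_singleton]
    constructor
    · rw [hstep t]; ring
    · exact hstep t
  | succ n hn ih =>
    obtain ⟨ih1, ih2⟩ := ih
    have hrecn : w t (n + 1 + 1) = (1 + α (n+1)) * w t (n+1) - α (n+1) * w t n := by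
      have := hrec t (n+1) (Nat.lt_succ_of_le hn)
      simpa using this
    have hprod : ∏ k ∈ Finset.Icc t (n+1), α k = (∏ k ∈ Finset.Icc t n, α k) * α (n+1) := by
      rw [← Finset.prod_Icc_succ_top (Nat.le_succ_of_le hn)]
    have hsum : ∑ j ∈ Finset.Icc t (n+1), ∏ k ∈ Finset.Icc t j, α k
        = (∑ j ∈ Finset.Icc t n, ∏ k ∈ Finset.Icc t j, α k) + ∏ k ∈ Finset.Icc t (n+1), α k := by
      rw [← Finset.sum_Icc_succ_top (Nat.le_succ_of_le hn)]
    have h1 : w t (n + 1 + 1) - w t (n + 1) = (∏ k ∈ Finset.Icc t (n+1), α k) * w t t := by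
      rw [hrecn, hprod]
      have : (1 + α (n+1)) * w t (n+1) - α (n+1) * w t n - w t (n+1)
          = α (n+1) * (w t (n+1) - w t n) := by ring
      rw [this, ih1]; ring
    refine ⟨h1, ?_⟩
    have := h1
    rw [ih2] at this
    rw [hsum]
    linarith [this]
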